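/- arXiv:math/0411405 — 2 statements merged into one kernel-verified Lean document; each statement's English description precedes it below -/
import Mathlib

section
/- Let n ≥ 1 and let F ∈ ℂ[X_0,…,X_{n+1}] be a nonzero homogeneous polynomial of degree d ≥ 1. Then im(E) ⊆ ker(h), and dim_ℂ R_{2d−n−2} = c_d + dim_ℂ(ker(h)/im(E)), where c_d = C(2d−1, n+1) − (n+2)·C(d, n+1). (In the paper this is the Proposition dim R_{2d−n−2} = c_d − dim H^0(X, Ω^n(log X)) rewritten via the identification of ker(h)/im(E) with H^0 of the sheaf of logarithmic n-forms; in particular, if ker(h) = im(E) then dim_ℂ R_{2d−n−2} = c_d.) -/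
open MvPolynomial

/-! ### Auxiliary lemmas -/

section DegreeAux
variable {σ : Type*}

lemma aux_degAdd (a b : σ →₀ ℕ) : Finsupp.degree (a + b) = a.degree + b.degree := by
  have := Finsupp.degree_eq_weight_one (σ := σ) (R := ℕ)
  simp only [this, map_add]

lemma aux_degSingle (i : σ) : (Finsupp.single i 1).degree = 1 := by
  have := Finsupp.degree_eq_weight_one (σ := σ) (R := ℕ)
  simp [this, Finsupp.weight_apply, Finsupp.sum_single_index]

lemma aux_sub_single_add (m : σ →₀ ℕ) (i : σ) (h : m i ≠ 0) :
    m - Finsupp.single i 1 + Finsupp.single i 1 = m :=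
  tsub_add_cancel_of_le (Finsupp.single_le_iff.mpr (by omega))

lemma aux_degSub (m : σ →₀ ℕ) (i : σ) (h : m i ≠ 0) :
    (m - Finsupp.single i 1).degree = m.degree - 1 := by
  have h2 := aux_degAdd (m - Finsupp.single i 1) (Finsupp.single i 1)
  rw [aux_sub_single_add m i h, aux_degSingle] at h2
  omega

lemma aux_pderiv_isHomogeneous {d : ℕ} {F : MvPolynomial σ ℂ} (hF : F.IsHomogeneous d) (i : σ) :
    (pderiv i F).IsHomogeneous (d - 1) := by
  rw [F.as_sum, map_sum]
  apply IsHomogeneous.sum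
  intro m hm
  rw [pderiv_monomial]
  by_cases h : m i = 0
  · simp only [h, Nat.cast_zero, mul_zero, map_zero]
    exact isHomogeneous_zero _ _ _
  · apply isHomogeneous_monomial
    have hd : m.degree = d := by
      rw [Finsupp.degree_eq_weight_one]; exact hF (mem_support_iff.mp hm)
    rw [aux_degSub m i h, hd]

lemma aux_X_mul_pderiv_monomial (i : σ) (m : σ →₀ ℕ) (c : ℂ) :
    X i * pderiv i (monomial m c) = monomial m (c * (m i : ℂ)) := by
  rw [pderiv_monomial]
  by_cases h : m i = 0
  · simp [h]
  · rw [X, monomial_mul, one_mul, add_comm, aux_sub_single_add m i h]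

lemma aux_euler [Fintype σ] {d : ℕ} {F : MvPolynomial σ ℂ} (hF : F.IsHomogeneous d) :
    ∑ i, X i * pderiv i F = (d : ℂ) • F := by
  conv_lhs => rw [F.as_sum]
  conv_rhs => rw [F.as_sum]
  simp only [map_sum, Finset.mul_sum, aux_X_mul_pderiv_monomial, Finset.smul_sum]
  rw [Finset.sum_comm]
  refine Finset.sum_congr rfl fun m hm => ?_
  rw [← map_sum, ← Finset.mul_sum]
  have hd : m.degree = d := by
    rw [Finsupp.degree_eq_weight_one]; exact hF (mem_support_iff.mp hm)
  have : ∑ i : σ, (m i : ℂ) = (d : ℂ) := by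
    rw [← hd, Finsupp.degree_apply]
    rw [Finset.sum_subset (Finset.subset_univ m.support)
      (fun x _ hx => by simpa using Finsupp.notMem_support_iff.mp hx)]
    push_cast
    rfl
  rw [this, smul_monomial, mul_comm, smul_eq_mul]

lemma aux_homogComp_mul {e M : ℕ} {g : MvPolynomial σ ℂ} (hg : g.IsHomogeneous e)
    (c : MvPolynomial σ ℂ) :
    homogeneousComponent M (c * g) =
      if e ≤ M then homogeneousComponent (M - e) c * g else 0 := by
  conv_lhs => rw [← sum_homogeneousComponent c, Finset.sum_mul, map_sum]
  have hterm : ∀ j ∈ Finset.range (c.totalDegree + 1),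
      homogeneousComponent M (homogeneousComponent j c * g) =
      if e ≤ M ∧ j = M - e then homogeneousComponent j c * g else 0 := by
    intro j _
    have hj : (homogeneousComponent j c * g).IsHomogeneous (j + e) :=
      (homogeneousComponent_isHomogeneous j c).mul hg
    rw [homogeneousComponent_of_mem hj]
    congr 1
    exact propext ⟨fun h => ⟨by omega, by omega⟩, fun h => by omega⟩
  rw [Finset.sum_congr rfl hterm]
  by_cases he : e ≤ M
  · simp only [he, true_and, if_pos]
    rw [Finset.sum_ite_eq' (Finset.range (c.totalDegree + 1)) (M - e)
      (fun j => homogeneousComponent j c * g)]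
    by_cases hmem : M - e ∈ Finset.range (c.totalDegree + 1)
    · rw [if_pos hmem]
    · rw [if_neg hmem, homogeneousComponent_eq_zero, zero_mul]
      simp only [Finset.mem_range] at hmem
      omega
  · simp [he]

end DegreeAux

section CountAux

noncomputable def aux_equivSym (N k : ℕ) :
    Sym (Fin N) k ≃ {m : Fin N →₀ ℕ // m.degree = k} :=
  Equiv.subtypeEquiv Multiset.toFinsupp.toEquiv fun s => by
    have : (Multiset.toFinsupp (α := Fin N) s).degree = Multiset.card s := by
      rw [Finsupp.degree, ← Multiset.toFinsupp_sum_eq]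
      rfl
    rw [show Multiset.toFinsupp.toEquiv s = Multiset.toFinsupp s from rfl, this]

noncomputable instance aux_instFT (N k : ℕ) : Fintype ↥{m : Fin N →₀ ℕ | m.degree = k} :=
  Fintype.ofEquiv _ (aux_equivSym N k)

lemma aux_card_deg (N k : ℕ) :
    Fintype.card ↥{m : Fin N →₀ ℕ | m.degree = k} = (N + k - 1).choose k := by
  have : Fintype {m : Fin N →₀ ℕ // m.degree = k} := aux_instFT N k
  rw [show Fintype.card ↥{m : Fin N →₀ ℕ | m.degree = k}
      = Fintype.card {m : Fin N →₀ ℕ // m.degree = k} from Fintype.card_congr (Equiv.refl _),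
    ← Fintype.card_congr (aux_equivSym N k), Sym.card_sym_eq_choose, Fintype.card_fin]

lemma aux_finrank_homog (N k : ℕ) :
    Module.finrank ℂ (homogeneousSubmodule (Fin N) ℂ k) = (N + k - 1).choose k := by
  classical
  rw [homogeneousSubmodule_eq_finsupp_supported]
  rw [(AddMonoidAlgebra.supportedEquivFinsupp {d : Fin N →₀ ℕ | d.degree = k}).finrank_eq]
  rw [Module.finrank_finsupp_self, aux_card_deg N k]

instance aux_fd_homog (N k : ℕ) :
    FiniteDimensional ℂ (homogeneousSubmodule (Fin N) ℂ k) := by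
  classical
  rw [homogeneousSubmodule_eq_finsupp_supported]
  exact Module.Finite.equiv (AddMonoidAlgebra.supportedEquivFinsupp {d : Fin N →₀ ℕ | d.degree = k}).symm

end CountAux

section LinAux
variable {M N : Type*} [AddCommGroup M] [Module ℂ M] [AddCommGroup N] [Module ℂ N]

lemma aux_finrank_map_add (f : M →ₗ[ℂ] N) (p : Submodule ℂ M)
    [FiniteDimensional ℂ p] :
    Module.finrank ℂ (Submodule.map f p) + Module.finrank ℂ ↥(p ⊓ LinearMap.ker f) =
      Module.finrank ℂ p := by
  have h1 := LinearMap.finrank_range_add_finrank_ker (f.domRestrict p)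
  rw [LinearMap.range_domRestrict] at h1
  rw [← h1]
  congr 1
  rw [LinearMap.ker_domRestrict]
  rw [← Submodule.finrank_map_subtype_eq p (Submodule.comap p.subtype (LinearMap.ker f)),
    Submodule.map_comap_subtype]

lemma aux_finrank_pi {n : ℕ} (p : Submodule ℂ M) [FiniteDimensional ℂ p] :
    FiniteDimensional ℂ (Submodule.pi (Set.univ : Set (Fin n)) fun _ => p) ∧
    Module.finrank ℂ (Submodule.pi (Set.univ : Set (Fin n)) fun _ => p) =
      n * Module.finrank ℂ p := by
  classical
  set L : (Fin n → p) →ₗ[ℂ] (Fin n → M) :=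
    LinearMap.pi (fun i => p.subtype ∘ₗ LinearMap.proj i) with hL
  have hrange : LinearMap.range L = Submodule.pi (Set.univ : Set (Fin n)) fun _ => p := by
    ext x
    simp only [LinearMap.mem_range, Submodule.mem_pi, Set.mem_univ, forall_true_left]
    constructor
    · rintro ⟨y, rfl⟩ i
      simp [hL]
    · intro h
      refine ⟨fun i => ⟨x i, h i⟩, ?_⟩
      ext i
      simp [hL]
  have hinj : Function.Injective L := by
    intro a b hab
    funext i
    ext
    have := congrFun hab i
    simpa [hL] using this
  have e := (LinearEquiv.ofInjective L hinj).symm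
  rw [← hrange]
  constructor
  · exact Module.Finite.equiv e.symm
  · rw [e.finrank_eq, Module.finrank_pi_fintype, Finset.sum_const, Finset.card_univ,
      Fintype.card_fin, smul_eq_mul]

end LinAux

/-! ### The statement's definitions -/

/-- The space `S_k` of homogeneous polynomials of (integer) degree `k`,
with `S_k = 0` for `k < 0`. -/
noncomputable def gradedPiece (n : ℕ) (k : ℤ) :
    Submodule ℂ (MvPolynomial (Fin (n + 2)) ℂ) :=
  if 0 ≤ k then homogeneousSubmodule (Fin (n + 2)) ℂ k.toNat else ⊥

/-- The Jacobian ideal of `F`, generated by its partial derivatives. -/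
noncomputable def jacobianIdeal (n : ℕ) (F : MvPolynomial (Fin (n + 2)) ℂ) :
    Ideal (MvPolynomial (Fin (n + 2)) ℂ) :=
  Ideal.span (Set.range fun i => pderiv i F)

/-- The graded piece `R_k = S_k/(J(F) ∩ S_k)` of the Jacobian ring in (integer)
degree `k`, realized as the image of `S_k` in `S/J(F)`. -/
noncomputable def jacobianRingPiece (n : ℕ) (F : MvPolynomial (Fin (n + 2)) ℂ) (k : ℤ) :
    Submodule ℂ (MvPolynomial (Fin (n + 2)) ℂ ⧸
      Submodule.restrictScalars ℂ (jacobianIdeal n F)) :=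
  Submodule.map (Submodule.restrictScalars ℂ (jacobianIdeal n F)).mkQ (gradedPiece n k)

/-- The Euler map `E : S → S^{n+2}`, `B ↦ (X_0 B, …, X_{n+1} B)`. -/
noncomputable def eulerMap (n : ℕ) :
    MvPolynomial (Fin (n + 2)) ℂ →ₗ[ℂ] (Fin (n + 2) → MvPolynomial (Fin (n + 2)) ℂ) :=
  LinearMap.pi fun i => LinearMap.mulLeft ℂ (X i)

/-- The map `S^{n+2} → S`, `(A_0, …, A_{n+1}) ↦ ∑ A_i ∂F/∂X_i`. -/
noncomputable def jacMap (n : ℕ) (F : MvPolynomial (Fin (n + 2)) ℂ) :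
    (Fin (n + 2) → MvPolynomial (Fin (n + 2)) ℂ) →ₗ[ℂ] MvPolynomial (Fin (n + 2)) ℂ :=
  ∑ i, (LinearMap.mulRight ℂ (pderiv i F)).comp (LinearMap.proj i)

/-- `im(E)`: the image of `S_{d-n-2}` under the Euler map. -/
noncomputable def imE (n d : ℕ) :
    Submodule ℂ (Fin (n + 2) → MvPolynomial (Fin (n + 2)) ℂ) :=
  Submodule.map (eulerMap n) (gradedPiece n ((d : ℤ) - n - 2))

/-- `ker(h)`: the tuples `(A_0, …, A_{n+1}) ∈ S_{d-n-1}^{⊕(n+2)}` with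
`∑ A_i ∂F/∂X_i ∈ F·S_{d-n-2}`. -/
noncomputable def kerH (n d : ℕ) (F : MvPolynomial (Fin (n + 2)) ℂ) :
    Submodule ℂ (Fin (n + 2) → MvPolynomial (Fin (n + 2)) ℂ) :=
  (Submodule.pi Set.univ fun _ => gradedPiece n ((d : ℤ) - n - 1)) ⊓
    Submodule.comap (jacMap n F)
      (Submodule.map (LinearMap.mulLeft ℂ F) (gradedPiece n ((d : ℤ) - n - 2)))

/-! ### Lemmas about these definitions -/

lemma gradedPiece_eq {n : ℕ} {k : ℤ} {m : ℕ} (h : k = (m : ℤ)) :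
    gradedPiece n k = homogeneousSubmodule (Fin (n + 2)) ℂ m := by
  subst h
  simp [gradedPiece]

lemma gradedPiece_neg {n : ℕ} {k : ℤ} (h : k < 0) : gradedPiece n k = ⊥ := by
  simp [gradedPiece, not_le.mpr h]

instance gradedPiece_fd (n : ℕ) (k : ℤ) : FiniteDimensional ℂ (gradedPiece n k) := by
  rcases le_or_gt 0 k with h | h
  · rw [gradedPiece_eq (Int.toNat_of_nonneg h).symm]
    infer_instance
  · rw [gradedPiece_neg h]
    infer_instance

lemma mul_mem_gradedPiece {n : ℕ} {k : ℤ} {e : ℕ} {B g : MvPolynomial (Fin (n + 2)) ℂ}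
    (hB : B ∈ gradedPiece n k) (hg : g.IsHomogeneous e) :
    B * g ∈ gradedPiece n (k + e) := by
  rcases le_or_gt 0 k with h | h
  · rw [gradedPiece_eq (Int.toNat_of_nonneg h).symm] at hB
    rw [gradedPiece_eq (m := k.toNat + e) (by omega)]
    exact (mem_homogeneousSubmodule _ _).mpr
      (((mem_homogeneousSubmodule _ _).mp hB).mul hg)
  · rw [gradedPiece_neg h, Submodule.mem_bot] at hB
    subst hB
    simp only [zero_mul]
    exact Submodule.zero_mem _

lemma jacMap_apply {n : ℕ} (F : MvPolynomial (Fin (n + 2)) ℂ)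
    (A : Fin (n + 2) → MvPolynomial (Fin (n + 2)) ℂ) :
    jacMap n F A = ∑ i, A i * pderiv i F := by
  simp [jacMap, LinearMap.sum_apply, LinearMap.mulRight_apply]

lemma eulerMap_apply {n : ℕ} (B : MvPolynomial (Fin (n + 2)) ℂ) :
    eulerMap n B = fun i => X i * B := by
  funext i
  simp [eulerMap, LinearMap.mulLeft_apply]

lemma jacMap_euler_tuple {n d : ℕ} {F : MvPolynomial (Fin (n + 2)) ℂ}
    (hF : F.IsHomogeneous d) (B : MvPolynomial (Fin (n + 2)) ℂ) :
    jacMap n F (fun i => X i * B) = (d : ℂ) • (F * B) := by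
  rw [jacMap_apply]
  have : ∀ i : Fin (n + 2), (X i * B) * pderiv i F = B * (X i * pderiv i F) := by
    intro i; ring
  rw [Finset.sum_congr rfl fun i _ => this i, ← Finset.mul_sum, aux_euler hF]
  rw [mul_smul_comm, mul_comm]

set_option maxHeartbeats 1000000 in
theorem dim_jacobian_ring_middle_piece_general
    (n d : ℕ) (hn : 1 ≤ n) (hd : 1 ≤ d)
    (F : MvPolynomial (Fin (n + 2)) ℂ) (hF0 : F ≠ 0) (hF : F.IsHomogeneous d) :
    imE n d ≤ kerH n d F ∧
    (Module.finrank ℂ (jacobianRingPiece n F (2 * (d : ℤ) - n - 2)) : ℤ) =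
      (((2 * d - 1).choose (n + 1) : ℤ) - (n + 2) * (d.choose (n + 1) : ℤ)) +
        (Module.finrank ℂ
          (↥(kerH n d F) ⧸ Submodule.comap (kerH n d F).subtype (imE n d)) : ℤ) := by
  classical
  set P := gradedPiece n ((d : ℤ) - n - 1) with hP
  set Q := gradedPiece n ((d : ℤ) - n - 2) with hQ
  set T := gradedPiece n (2 * (d : ℤ) - n - 2) with hT
  set W : Submodule ℂ (Fin (n + 2) → MvPolynomial (Fin (n + 2)) ℂ) :=
    Submodule.pi (Set.univ : Set (Fin (n + 2))) fun _ => P with hW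
  set φ := jacMap n F with hφ
  set J' := Submodule.restrictScalars ℂ (jacobianIdeal n F) with hJ'
  -- X_i times an element of Q lands in P
  have hXQ : ∀ B ∈ Q, ∀ i : Fin (n + 2), X i * B ∈ P := by
    intro B hB i
    have := mul_mem_gradedPiece hB (isHomogeneous_X ℂ i)
    rw [mul_comm] at this
    rw [hP, show (d : ℤ) - n - 1 = ((d : ℤ) - n - 2) + (1 : ℕ) by push_cast; ring]
    exact this
  -- first claim: imE ≤ kerH
  have hImKer : imE n d ≤ kerH n d F := by
    rintro x hx
    obtain ⟨B, hB, rfl⟩ := hx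
    constructor
    · intro i _
      rw [eulerMap_apply]
      exact hXQ B hB i
    · have heq : jacMap n F (eulerMap n B) = F * ((d : ℂ) • B) := by
        rw [eulerMap_apply, jacMap_euler_tuple hF B, mul_smul_comm]
      refine Submodule.mem_comap.mpr ?_
      rw [heq]
      exact ⟨(d : ℂ) • B, Submodule.smul_mem _ _ hB, by simp [LinearMap.mulLeft_apply]⟩
  refine ⟨hImKer, ?_⟩
  rcases lt_or_ge (2 * (d : ℤ) - n - 2) 0 with hneg | hpos
  · -- degenerate case: everything is zero
    have hTbot : T = ⊥ := gradedPiece_neg hneg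
    have hPbot : P = ⊥ := gradedPiece_neg (by omega)
    have hkerbot : kerH n d F = ⊥ := by
      refine le_bot_iff.mp fun x hx => ?_
      have h1 : ∀ i ∈ Set.univ, x i ∈ gradedPiece n ((d : ℤ) - n - 1) :=
        Submodule.mem_pi.mp hx.1
      rw [Submodule.mem_bot]
      funext i
      have h2 := h1 i (Set.mem_univ i)
      rw [gradedPiece_neg (by omega : (d : ℤ) - n - 1 < 0), Submodule.mem_bot] at h2
      exact h2
    have hsub : Subsingleton ↥(kerH n d F) := by
      rw [hkerbot]; infer_instance
    have hsubq : Subsingleton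
        (↥(kerH n d F) ⧸ Submodule.comap (kerH n d F).subtype (imE n d)) :=
      (Submodule.Quotient.mk_surjective _).subsingleton
    have hq0 : Module.finrank ℂ
        (↥(kerH n d F) ⧸ Submodule.comap (kerH n d F).subtype (imE n d)) = 0 :=
      Module.finrank_zero_of_subsingleton
    have hr0 : jacobianRingPiece n F (2 * (d : ℤ) - n - 2) = ⊥ := by
      rw [jacobianRingPiece, ← hT, hTbot, Submodule.map_bot]
    have hc1 : (2 * d - 1).choose (n + 1) = 0 := Nat.choose_eq_zero_of_lt (by omega)
    have hc2 : d.choose (n + 1) = 0 := Nat.choose_eq_zero_of_lt (by omega)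
    rw [hr0, hq0, hc1, hc2]
    simp
  · -- main case
    obtain ⟨M2, hM2⟩ : ∃ M2 : ℕ, 2 * (d : ℤ) - n - 2 = (M2 : ℤ) :=
      ⟨(2 * (d : ℤ) - n - 2).toNat, (Int.toNat_of_nonneg hpos).symm⟩
    have hTeq : T = homogeneousSubmodule (Fin (n + 2)) ℂ M2 := gradedPiece_eq hM2
    -- membership of jacMap images in T
    have hφT : ∀ A : Fin (n + 2) → MvPolynomial (Fin (n + 2)) ℂ, (∀ i, A i ∈ P) → φ A ∈ T := by
      intro A hA
      rw [hφ, jacMap_apply]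
      apply Submodule.sum_mem
      intro i _
      have := mul_mem_gradedPiece (hA i) (aux_pderiv_isHomogeneous hF i)
      rw [hT, show 2 * (d : ℤ) - n - 2 = ((d : ℤ) - n - 1) + ((d - 1 : ℕ) : ℤ) by
        push_cast [Nat.cast_sub hd]; ring]
      exact this
    -- membership of jacMap images in J'
    have hφJ : ∀ A : Fin (n + 2) → MvPolynomial (Fin (n + 2)) ℂ, φ A ∈ J' := by
      intro A
      rw [hJ', Submodule.restrictScalars_mem, hφ, jacMap_apply]
      exact Ideal.sum_mem _ fun i _ =>
        Ideal.mul_mem_left _ _ (Ideal.subset_span ⟨i, rfl⟩)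
    -- the degree-M2 part of the Jacobian ideal is the image of W
    have hinter : T ⊓ J' = Submodule.map φ W := by
      apply le_antisymm
      · rintro p ⟨hpT, hpJ⟩
        have hpJ2 : p ∈ jacobianIdeal n F := hpJ
        rw [jacobianIdeal, Ideal.mem_span_range_iff_exists_fun] at hpJ2
        obtain ⟨c, hc⟩ := hpJ2
        have hphomog : p ∈ homogeneousSubmodule (Fin (n + 2)) ℂ M2 := by
          rw [← hTeq]; exact hpT
        have hpcomp : homogeneousComponent M2 p = p := by
          rw [homogeneousComponent_of_mem hphomog, if_pos rfl]
        have hdecomp : p = ∑ i, homogeneousComponent M2 (c i * pderiv i F) := by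
          rw [← map_sum, hc, hpcomp]
        by_cases hdM : d - 1 ≤ M2
        · -- each component is (component of c i) * ∂F/∂X_i
          refine ⟨fun i => homogeneousComponent (M2 - (d - 1)) (c i), ?_, ?_⟩
          · intro i _
            rw [hP, gradedPiece_eq (m := M2 - (d - 1)) (by omega)]
            exact homogeneousComponent_mem _ _
          · rw [hφ, jacMap_apply, hdecomp]
            refine Finset.sum_congr rfl fun i _ => ?_
            rw [aux_homogComp_mul (aux_pderiv_isHomogeneous hF i) (c i), if_pos hdM]
        · -- all components vanish and p = 0
          have hp0 : p = 0 := by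
            rw [hdecomp]
            refine Finset.sum_eq_zero fun i _ => ?_
            rw [aux_homogComp_mul (aux_pderiv_isHomogeneous hF i) (c i), if_neg hdM]
          rw [hp0]
          exact Submodule.zero_mem _
      · rintro _ ⟨A, hA, rfl⟩
        exact ⟨hφT A fun i => hA i (Set.mem_univ i), hφJ A⟩
    -- finite dimensionality of W
    obtain ⟨hWfd, hWrank⟩ := aux_finrank_pi (n := n + 2) P
    haveI : FiniteDimensional ℂ W := hWfd
    haveI : FiniteDimensional ℂ ↥(kerH n d F) :=
      Submodule.finiteDimensional_of_le (inf_le_left :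
        kerH n d F ≤ Submodule.pi Set.univ fun _ => gradedPiece n ((d : ℤ) - n - 1))
    -- rank computations
    have h8 : Module.finrank ℂ (jacobianRingPiece n F (2 * (d : ℤ) - n - 2)) +
        Module.finrank ℂ (Submodule.map φ W) = Module.finrank ℂ T := by
      have := aux_finrank_map_add J'.mkQ T
      rw [Submodule.ker_mkQ, hinter] at this
      exact this
    have h9 : Module.finrank ℂ (Submodule.map φ W) +
        Module.finrank ℂ ↥(W ⊓ LinearMap.ker φ) = Module.finrank ℂ W :=
      aux_finrank_map_add φ W
    -- image of kerH under φ is F·Q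
    have hFQ : Submodule.map φ (kerH n d F) = Submodule.map (LinearMap.mulLeft ℂ F) Q := by
      apply le_antisymm
      · rintro _ ⟨A, hA, rfl⟩
        exact hA.2
      · rintro _ ⟨B, hB, rfl⟩
        have hd0 : (d : ℂ) ≠ 0 := Nat.cast_ne_zero.mpr (by omega)
        have hφA : jacMap n F (fun i => (d : ℂ)⁻¹ • (X i * B)) = F * B := by
          rw [jacMap_apply]
          have hsm : ∀ i : Fin (n + 2), ((d : ℂ)⁻¹ • (X i * B)) * pderiv i F =
              (d : ℂ)⁻¹ • ((X i * B) * pderiv i F) := fun i => smul_mul_assoc _ _ _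
          rw [Finset.sum_congr rfl fun i _ => hsm i, ← Finset.smul_sum]
          have h2 : (jacMap n F fun i => X i * B) = ∑ i, (X i * B) * pderiv i F :=
            jacMap_apply _ _
          rw [← h2, jacMap_euler_tuple hF B, smul_smul, inv_mul_cancel₀ hd0, one_smul]
        refine ⟨fun i => (d : ℂ)⁻¹ • (X i * B), ⟨?_, ?_⟩, ?_⟩
        · intro i _
          exact Submodule.smul_mem _ _ (hXQ B hB i)
        · exact Submodule.mem_comap.mpr
            (by rw [hφA]; exact ⟨B, hB, by simp [LinearMap.mulLeft_apply]⟩)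
        · rw [hφ, hφA]
          simp [LinearMap.mulLeft_apply]
    have hkerinf : kerH n d F ⊓ LinearMap.ker φ = W ⊓ LinearMap.ker φ := by
      apply le_antisymm
      · exact inf_le_inf_right _ inf_le_left
      · rintro x ⟨hxW, hxk⟩
        refine ⟨⟨fun i _ => hxW i (Set.mem_univ i), ?_⟩, hxk⟩
        refine Submodule.mem_comap.mpr ?_
        rw [show jacMap n F x = 0 from hxk]
        exact Submodule.zero_mem _
    have h11 : Module.finrank ℂ (Submodule.map (LinearMap.mulLeft ℂ F) Q) +
        Module.finrank ℂ ↥(W ⊓ LinearMap.ker φ) = Module.finrank ℂ ↥(kerH n d F) := by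
      have := aux_finrank_map_add φ (kerH n d F)
      rw [hFQ, hkerinf] at this
      exact this
    -- F·Q has the same dimension as Q
    have h12 : Module.finrank ℂ (Submodule.map (LinearMap.mulLeft ℂ F) Q) =
        Module.finrank ℂ Q := by
      have hker : LinearMap.ker (LinearMap.mulLeft ℂ F) = ⊥ := by
        rw [LinearMap.ker_eq_bot]
        intro a b hab
        simp only [LinearMap.mulLeft_apply] at hab
        exact mul_left_cancel₀ hF0 hab
      have := aux_finrank_map_add (LinearMap.mulLeft ℂ F) Q
      rw [hker, inf_bot_eq] at this
      simpa using this
    -- imE has the same dimension as Q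
    have h13 : Module.finrank ℂ (imE n d) = Module.finrank ℂ Q := by
      have hker : LinearMap.ker (eulerMap n) = ⊥ := by
        rw [LinearMap.ker_eq_bot]
        intro a b hab
        have := congrFun hab 0
        simp only [eulerMap_apply] at this
        rw [eulerMap_apply, eulerMap_apply] at hab
        have h0 := congrFun hab 0
        exact mul_left_cancel₀ (X_ne_zero 0) h0
      have := aux_finrank_map_add (eulerMap n) Q
      rw [hker, inf_bot_eq] at this
      rw [imE, ← hQ]
      simpa using this
    -- quotient dimension
    have h15 : Module.finrank ℂ
        (↥(kerH n d F) ⧸ Submodule.comap (kerH n d F).subtype (imE n d)) +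
        Module.finrank ℂ (Submodule.comap (kerH n d F).subtype (imE n d)) =
        Module.finrank ℂ ↥(kerH n d F) :=
      Submodule.finrank_quotient_add_finrank _
    have h15b : Module.finrank ℂ (Submodule.comap (kerH n d F).subtype (imE n d)) =
        Module.finrank ℂ (imE n d) := by
      rw [← Submodule.finrank_map_subtype_eq (kerH n d F)
        (Submodule.comap (kerH n d F).subtype (imE n d)), Submodule.map_comap_subtype,
        inf_eq_right.mpr hImKer]
    -- dimension of T
    have ht : Module.finrank ℂ T = (2 * d - 1).choose (n + 1) := by
      rw [hTeq, aux_finrank_homog]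
      rw [show n + 2 + M2 - 1 = 2 * d - 1 by omega,
        show M2 = (2 * d - 1) - (n + 1) by omega,
        Nat.choose_symm (by omega)]
    -- dimension of P
    have hp : Module.finrank ℂ P = d.choose (n + 1) := by
      rcases le_or_gt (n + 1) d with hcase | hcase
      · rw [hP, gradedPiece_eq (m := d - (n + 1)) (by omega), aux_finrank_homog,
          show n + 2 + (d - (n + 1)) - 1 = d by omega,
          show d - (n + 1) = d - (n + 1) from rfl]
        rw [show (d - (n+1)) = d - (n+1) from rfl, ← Nat.choose_symm (show n + 1 ≤ d by omega)]
      · rw [hP, gradedPiece_neg (by omega), finrank_bot,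
          Nat.choose_eq_zero_of_lt (by omega)]
    have hw : Module.finrank ℂ W = (n + 2) * d.choose (n + 1) := by
      rw [hWrank, hp]
    -- final arithmetic
    have e1 : (Module.finrank ℂ (jacobianRingPiece n F (2 * (d : ℤ) - n - 2)) : ℤ) +
        (Module.finrank ℂ (Submodule.map φ W) : ℤ) = (Module.finrank ℂ T : ℤ) := by
      exact_mod_cast h8
    have e2 : (Module.finrank ℂ (Submodule.map φ W) : ℤ) +
        (Module.finrank ℂ ↥(W ⊓ LinearMap.ker φ) : ℤ) = (Module.finrank ℂ W : ℤ) := by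
      exact_mod_cast h9
    have e3 : (Module.finrank ℂ Q : ℤ) +
        (Module.finrank ℂ ↥(W ⊓ LinearMap.ker φ) : ℤ) =
        (Module.finrank ℂ ↥(kerH n d F) : ℤ) := by
      rw [← h12]; exact_mod_cast h11
    have e4 : (Module.finrank ℂ
        (↥(kerH n d F) ⧸ Submodule.comap (kerH n d F).subtype (imE n d)) : ℤ) +
        (Module.finrank ℂ Q : ℤ) = (Module.finrank ℂ ↥(kerH n d F) : ℤ) := by
      rw [← h13, ← h15b]; exact_mod_cast h15
    have et : (Module.finrank ℂ T : ℤ) = ((2 * d - 1).choose (n + 1) : ℤ) := by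
      exact_mod_cast ht
    have ew : (Module.finrank ℂ W : ℤ) = ((n : ℤ) + 2) * (d.choose (n + 1) : ℤ) := by
      rw [hw]; push_cast; ring
    linarith
end

section
/- Let f ∈ ℂ[[x,y]] be a nonzero nonunit squarefree formal power series which is quasi-homogeneous, i.e., there exist positive rationals w_x, w_y with w_x·x·f_x + w_y·y·f_y = f. Then the ℂ[[x,y]]-module Ω(f) = {(A,B) ∈ ℂ[[x,y]]² : A·f_y − B·f_x ∈ (f)} is free of rank two with basis (f_x, f_y) and (w_y·y, −w_x·x). (Equivalently: the forms df/f and (w_y·y·dx − w_x·x·dy)/f form a local basis of the sheaf Ω^1(log X) of logarithmic 1-forms along X = V(f).) -/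
set_option synthInstance.maxHeartbeats 1000000
set_option maxHeartbeats 1000000

/-- Formal partial derivative of a formal power series in two variables
with respect to the `i`-th variable. -/
noncomputable def pderiv2 (i : Fin 2) (f : MvPowerSeries (Fin 2) ℂ) :
    MvPowerSeries (Fin 2) ℂ :=
  fun e => ((e i : ℂ) + 1) * MvPowerSeries.coeff (e + Finsupp.single i 1) f

/-- The map `ℂ[[x,y]]² → ℂ[[x,y]]`, `(A,B) ↦ A·f_y − B·f_x`. -/
noncomputable def logFormsMap (f : MvPowerSeries (Fin 2) ℂ) :
    (MvPowerSeries (Fin 2) ℂ × MvPowerSeries (Fin 2) ℂ) →ₗ[MvPowerSeries (Fin 2) ℂ]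
      MvPowerSeries (Fin 2) ℂ :=
  pderiv2 1 f • LinearMap.fst (MvPowerSeries (Fin 2) ℂ) _ _
    - pderiv2 0 f • LinearMap.snd (MvPowerSeries (Fin 2) ℂ) _ _

/-- `Ω(f) = {(A,B) ∈ ℂ[[x,y]]² : A·f_y − B·f_x ∈ (f)}`, the module of local
sections of the sheaf `Ω¹(log X)` of logarithmic 1-forms along `X = V(f)`. -/
noncomputable def logForms (f : MvPowerSeries (Fin 2) ℂ) :
    Submodule (MvPowerSeries (Fin 2) ℂ)
      (MvPowerSeries (Fin 2) ℂ × MvPowerSeries (Fin 2) ℂ) :=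
  Submodule.comap (logFormsMap f) (Ideal.span {f})

namespace SaitoQH

open MvPolynomial Finsupp Classical

abbrev R2 := MvPowerSeries (Fin 2) ℂ
abbrev S2 := MvPolynomial (Fin 2) ℂ


/-- weighted degree of an exponent -/
def wdeg (wx wy : ℚ) (e : Fin 2 →₀ ℕ) : ℚ := wx * e 0 + wy * e 1

lemma wdeg_add (wx wy : ℚ) (a b : Fin 2 →₀ ℕ) :
    wdeg wx wy (a + b) = wdeg wx wy a + wdeg wx wy b := by
  simp only [wdeg, Finsupp.add_apply]
  push_cast; ring

lemma wdeg_zero (wx wy : ℚ) : wdeg wx wy 0 = 0 := by simp [wdeg]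

lemma fin2_eq (d : Fin 2 →₀ ℕ) : d = single 0 (d 0) + single 1 (d 1) := by
  ext i
  fin_cases i <;> simp [Finsupp.single_apply]

lemma wdeg_nonneg {wx wy : ℚ} (hwx : 0 ≤ wx) (hwy : 0 ≤ wy) (d : Fin 2 →₀ ℕ) :
    0 ≤ wdeg wx wy d := by
  have : (0:ℚ) ≤ (d 0 : ℚ) := by positivity
  have : (0:ℚ) ≤ (d 1 : ℚ) := by positivity
  unfold wdeg; positivity

lemma wdeg_eq_zero {wx wy : ℚ} (hwx : 0 < wx) (hwy : 0 < wy) {d : Fin 2 →₀ ℕ}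
    (h : wdeg wx wy d = 0) : d = 0 := by
  unfold wdeg at h
  have h0 : (d 0 : ℚ) = 0 ∧ (d 1 : ℚ) = 0 := by
    constructor <;> nlinarith [Nat.cast_nonneg (α := ℚ) (d 0), Nat.cast_nonneg (α := ℚ) (d 1)]
  ext i
  fin_cases i
  · simpa using (by exact_mod_cast h0.1 : d 0 = 0)
  · simpa using (by exact_mod_cast h0.2 : d 1 = 0)
  
lemma wdeg_add_single (wx wy : ℚ) (e : Fin 2 →₀ ℕ) (i : Fin 2) :
    wdeg wx wy (e + single i 1) = wdeg wx wy e + ![wx, wy] i := by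
  fin_cases i <;>
    simp [wdeg, Finsupp.add_apply, Finsupp.single_apply] <;> ring


lemma coeff_pderiv2 (i : Fin 2) (f : R2) (e : Fin 2 →₀ ℕ) :
    MvPowerSeries.coeff e (pderiv2 i f) =
      ((e i : ℂ) + 1) * MvPowerSeries.coeff (e + Finsupp.single i 1) f := rfl

lemma coeff_pderiv (i : Fin 2) (P : S2) (e : Fin 2 →₀ ℕ) :
    coeff e (pderiv i P) = ((e i : ℂ) + 1) * coeff (e + Finsupp.single i 1) P := by
  induction P using MvPolynomial.induction_on' with
  | add p q hp hq => simp [map_add, hp, hq]; ring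
  | monomial u a =>
    rw [pderiv_monomial]
    rcases Nat.eq_zero_or_pos (u i) with h0 | h1
    · have hne : ¬ u = e + Finsupp.single i 1 := by
        intro h
        rw [h] at h0
        simp [Finsupp.add_apply, Finsupp.single_apply] at h0
      have h2 : u - Finsupp.single i 1 = u := by
        ext j
        rcases eq_or_ne j i with rfl | hj
        · simp [Finsupp.tsub_apply, Finsupp.single_apply, h0]
        · simp [Finsupp.tsub_apply, Finsupp.single_apply, hj.symm]
      rw [h2, coeff_monomial, coeff_monomial, if_neg hne]
      split_ifs with h
      · subst h; simp [h0]
      · ring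
    · have hle : Finsupp.single i 1 ≤ u := by
        rw [Finsupp.single_le_iff]; exact h1
      have key : u - Finsupp.single i 1 = e ↔ u = e + Finsupp.single i 1 :=
        tsub_eq_iff_eq_add_of_le hle
      rw [coeff_monomial, coeff_monomial]
      split_ifs with h h' h'
      · rw [key] at h
        rw [h]
        simp [Finsupp.add_apply, Finsupp.single_apply]
        push_cast; ring
      · rw [key] at h; exact absurd h h'
      · rw [← key] at h'; exact absurd h' h
      · ring

lemma coe_pderiv (i : Fin 2) (P : S2) :
    ((pderiv i P : S2) : R2) = pderiv2 i (P : R2) := by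
  apply MvPowerSeries.ext
  intro e
  rw [MvPolynomial.coeff_coe, coeff_pderiv, coeff_pderiv2, MvPolynomial.coeff_coe]

noncomputable def compP (wx wy s : ℚ) (D : S2) : S2 :=
  ∑ e ∈ D.support, monomial e (if wdeg wx wy e = s then coeff e D else 0)

lemma coeff_compP (wx wy s : ℚ) (D : S2) (d : Fin 2 →₀ ℕ) :
    coeff d (compP wx wy s D) = if wdeg wx wy d = s then coeff d D else 0 := by
  rw [compP, coeff_sum]
  simp only [coeff_monomial]
  rw [Finset.sum_ite_eq' D.support d]
  by_cases hs : d ∈ D.support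
  · simp [hs]
  · rw [MvPolynomial.notMem_support_iff] at hs
    simp [hs]

lemma exists_coeff_mul_ne_zero (wx wy u v : ℚ) (D E : S2)
    (hDa : ∃ a, coeff a D ≠ 0 ∧ wdeg wx wy a = u)
    (hEa : ∃ b, coeff b E ≠ 0 ∧ wdeg wx wy b = v)
    (hsplit : ∀ a b, coeff a D ≠ 0 → coeff b E ≠ 0 →
      wdeg wx wy a + wdeg wx wy b = u + v → wdeg wx wy a = u) :
    ∃ e, coeff e (D * E) ≠ 0 ∧ wdeg wx wy e = u + v := by
  obtain ⟨a₀, ha1, ha2⟩ := hDa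
  obtain ⟨b₀, hb1, hb2⟩ := hEa
  set A := compP wx wy u D with hAdef
  set B := compP wx wy v E with hBdef
  have hA : A ≠ 0 := by
    intro h
    have : coeff a₀ A ≠ 0 := by rw [hAdef, coeff_compP, if_pos ha2]; exact ha1
    exact this (by rw [h]; simp)
  have hB : B ≠ 0 := by
    intro h
    have : coeff b₀ B ≠ 0 := by rw [hBdef, coeff_compP, if_pos hb2]; exact hb1
    exact this (by rw [h]; simp)
  obtain ⟨e, he⟩ := MvPolynomial.ne_zero_iff.mp (mul_ne_zero hA hB)
  have hcm := MvPolynomial.coeff_mul A B e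
  obtain ⟨p, hpmem, hpne⟩ := Finset.exists_ne_zero_of_sum_ne_zero (by rw [← hcm]; exact he)
  have hpa : coeff p.1 A ≠ 0 := left_ne_zero_of_mul hpne
  have hpb : coeff p.2 B ≠ 0 := right_ne_zero_of_mul hpne
  have hwa : wdeg wx wy p.1 = u := by
    by_contra h
    rw [hAdef, coeff_compP, if_neg h] at hpa; exact hpa rfl
  have hwb : wdeg wx wy p.2 = v := by
    by_contra h
    rw [hBdef, coeff_compP, if_neg h] at hpb; exact hpb rfl
  have hpe : p.1 + p.2 = e := Finset.HasAntidiagonal.mem_antidiagonal.mp hpmem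
  have hwe : wdeg wx wy e = u + v := by rw [← hpe, wdeg_add, hwa, hwb]
  refine ⟨e, ?_, hwe⟩
  have hco : coeff e (D * E) = coeff e (A * B) := by
    rw [MvPolynomial.coeff_mul, MvPolynomial.coeff_mul]
    refine Finset.sum_congr rfl ?_
    rintro ⟨a, b⟩ hmem
    have hab : a + b = e := Finset.HasAntidiagonal.mem_antidiagonal.mp hmem
    by_cases hD0 : coeff a D = 0
    · simp [hAdef, coeff_compP, hD0]
    by_cases hE0 : coeff b E = 0
    · simp [hBdef, coeff_compP, hE0]
    have hsum : wdeg wx wy a + wdeg wx wy b = u + v := by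
      rw [← wdeg_add, hab, hwe]
    have hwa' : wdeg wx wy a = u := hsplit a b hD0 hE0 hsum
    have hwb' : wdeg wx wy b = v := by linarith
    simp [hAdef, hBdef, coeff_compP, hwa', hwb']
  rw [hco]; exact he

lemma divisor_constantCoeff {wx wy : ℚ} (hwx : 0 < wx) (hwy : 0 < wy)
    {F D : S2} {t : ℚ} (hF0 : F ≠ 0)
    (hhom : ∀ a, coeff a F ≠ 0 → wdeg wx wy a = t)
    (hdvd : D ∣ F) (hD : ¬IsUnit D) : coeff 0 D = 0 := by
  by_contra h0
  obtain ⟨E, hFE⟩ := hdvd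
  have hD0 : D ≠ 0 := by rintro rfl; rw [zero_mul] at hFE; exact hF0 hFE
  have hE0 : E ≠ 0 := by rintro rfl; rw [mul_zero] at hFE; exact hF0 hFE
  have hDs : D.support.Nonempty := MvPolynomial.support_nonempty.mpr hD0
  have hEs : E.support.Nonempty := MvPolynomial.support_nonempty.mpr hE0
  have hDi : (D.support.image (wdeg wx wy)).Nonempty := hDs.image _
  have hEi : (E.support.image (wdeg wx wy)).Nonempty := hEs.image _
  set u := (D.support.image (wdeg wx wy)).max' hDi with hu
  set u' := (D.support.image (wdeg wx wy)).min' hDi with hu'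
  set v := (E.support.image (wdeg wx wy)).max' hEi with hv
  set v' := (E.support.image (wdeg wx wy)).min' hEi with hv'
  have hmemD : ∀ a, coeff a D ≠ 0 → wdeg wx wy a ∈ D.support.image (wdeg wx wy) :=
    fun a ha => Finset.mem_image_of_mem _ (MvPolynomial.mem_support_iff.mpr ha)
  have hmemE : ∀ b, coeff b E ≠ 0 → wdeg wx wy b ∈ E.support.image (wdeg wx wy) :=
    fun b hb => Finset.mem_image_of_mem _ (MvPolynomial.mem_support_iff.mpr hb)
  have attainD : ∀ z ∈ D.support.image (wdeg wx wy), ∃ a, coeff a D ≠ 0 ∧ wdeg wx wy a = z := by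
    intro z hz
    obtain ⟨a, ha, rfl⟩ := Finset.mem_image.mp hz
    exact ⟨a, MvPolynomial.mem_support_iff.mp ha, rfl⟩
  -- top weight
  have htop : ∃ e, coeff e (D * E) ≠ 0 ∧ wdeg wx wy e = u + v := by
    refine exists_coeff_mul_ne_zero wx wy u v D E
      (attainD _ (Finset.max'_mem _ hDi)) ?_ ?_
    · obtain ⟨b, hb, hbw⟩ := Finset.mem_image.mp (Finset.max'_mem _ hEi)
      exact ⟨b, MvPolynomial.mem_support_iff.mp hb, by rw [hbw, ← hv]⟩
    · intro a b ha hb hsum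
      have h1 : wdeg wx wy a ≤ u := Finset.le_max' _ _ (hmemD a ha)
      have h2 : wdeg wx wy b ≤ v := Finset.le_max' _ _ (hmemE b hb)
      linarith
  -- bottom weight
  have hbot : ∃ e, coeff e (D * E) ≠ 0 ∧ wdeg wx wy e = u' + v' := by
    refine exists_coeff_mul_ne_zero wx wy u' v' D E
      (attainD _ (Finset.min'_mem _ hDi)) ?_ ?_
    · obtain ⟨b, hb, hbw⟩ := Finset.mem_image.mp (Finset.min'_mem _ hEi)
      exact ⟨b, MvPolynomial.mem_support_iff.mp hb, by rw [hbw, ← hv']⟩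
    · intro a b ha hb hsum
      have h1 : u' ≤ wdeg wx wy a := Finset.min'_le _ _ (hmemD a ha)
      have h2 : v' ≤ wdeg wx wy b := Finset.min'_le _ _ (hmemE b hb)
      linarith
  obtain ⟨e1, he1, hw1⟩ := htop
  obtain ⟨e2, he2, hw2⟩ := hbot
  rw [← hFE] at he1 he2
  have ht1 : u + v = t := by rw [← hhom e1 he1, hw1]
  have ht2 : u' + v' = t := by rw [← hhom e2 he2, hw2]
  have huu : u' ≤ u := Finset.min'_le _ _ (Finset.max'_mem _ hDi)
  have hvv : v' ≤ v := Finset.min'_le _ _ (Finset.max'_mem _ hEi)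
  have hueq : u = u' := by linarith
  -- u' ≤ 0 since 0 is in the support weights
  have h0mem : (0:ℚ) ∈ D.support.image (wdeg wx wy) := by
    have := hmemD 0 h0
    rwa [wdeg_zero] at this
  have hule : u' ≤ 0 := Finset.min'_le _ _ h0mem
  -- all supp weights are = 0, hence supp D ⊆ {0}
  have hsupp : ∀ a, coeff a D ≠ 0 → a = 0 := by
    intro a ha
    have h1 : wdeg wx wy a ≤ u := Finset.le_max' _ _ (hmemD a ha)
    have h2 : 0 ≤ wdeg wx wy a := wdeg_nonneg hwx.le hwy.le a
    have : wdeg wx wy a = 0 := by linarith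
    exact wdeg_eq_zero hwx hwy this
  have hDC : D = C (coeff 0 D) := by
    apply MvPolynomial.ext
    intro m
    by_cases hm : m = 0
    · subst hm; simp [MvPolynomial.coeff_C]
    · rw [MvPolynomial.coeff_C, if_neg (fun h => hm h.symm)]
      by_contra hc
      exact hm (hsupp m hc)
  exact hD (hDC ▸ (isUnit_iff_ne_zero.mpr h0).map (C : ℂ →+* S2))

lemma dvd_pderiv_eq_zero {P : S2} (hP0 : P ≠ 0) (i : Fin 2)
    (hdvd : P ∣ pderiv i P) : pderiv i P = 0 := by
  by_contra hne
  obtain ⟨c, hc⟩ := hdvd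
  have hc0 : c ≠ 0 := by rintro rfl; rw [mul_zero] at hc; exact hne hc
  have hPs : (P.support.image (wdeg 1 1)).Nonempty :=
    (MvPolynomial.support_nonempty.mpr hP0).image _
  have hcs : (c.support.image (wdeg 1 1)).Nonempty :=
    (MvPolynomial.support_nonempty.mpr hc0).image _
  set u := (P.support.image (wdeg 1 1)).max' hPs with hu
  set v := (c.support.image (wdeg 1 1)).max' hcs with hv
  have hmemP : ∀ a, coeff a P ≠ 0 → wdeg 1 1 a ∈ P.support.image (wdeg 1 1) :=
    fun a ha => Finset.mem_image_of_mem _ (MvPolynomial.mem_support_iff.mpr ha)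
  have hmemc : ∀ a, coeff a c ≠ 0 → wdeg 1 1 a ∈ c.support.image (wdeg 1 1) :=
    fun a ha => Finset.mem_image_of_mem _ (MvPolynomial.mem_support_iff.mpr ha)
  have htop : ∃ e, coeff e (P * c) ≠ 0 ∧ wdeg 1 1 e = u + v := by
    refine exists_coeff_mul_ne_zero 1 1 u v P c ?_ ?_ ?_
    · obtain ⟨a, ha, haw⟩ := Finset.mem_image.mp (Finset.max'_mem _ hPs)
      exact ⟨a, MvPolynomial.mem_support_iff.mp ha, by rw [haw, ← hu]⟩
    · obtain ⟨b, hb, hbw⟩ := Finset.mem_image.mp (Finset.max'_mem _ hcs)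
      exact ⟨b, MvPolynomial.mem_support_iff.mp hb, by rw [hbw, ← hv]⟩
    · intro a b ha hb hsum
      have h1 : wdeg 1 1 a ≤ u := Finset.le_max' _ _ (hmemP a ha)
      have h2 : wdeg 1 1 b ≤ v := Finset.le_max' _ _ (hmemc b hb)
      linarith
  obtain ⟨e, he, hwe⟩ := htop
  rw [← hc] at he
  have hv0 : 0 ≤ v := by
    obtain ⟨b, hb, hbw⟩ := Finset.mem_image.mp (Finset.max'_mem _ hcs)
    rw [hv, ← hbw]; exact wdeg_nonneg zero_le_one zero_le_one b
  have hP' : coeff (e + Finsupp.single i 1) P ≠ 0 := by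
    rw [coeff_pderiv] at he
    exact right_ne_zero_of_mul he
  have hle : wdeg 1 1 (e + Finsupp.single i 1) ≤ u :=
    Finset.le_max' _ _ (hmemP _ hP')
  have hone : (![(1:ℚ), 1] i) = 1 := by fin_cases i <;> rfl
  rw [wdeg_add_single, hone] at hle
  linarith

lemma eq_C_of_pderiv_eq_zero {P : S2} (h0 : pderiv 0 P = 0) (h1 : pderiv 1 P = 0) :
    P = C (coeff 0 P) := by
  apply MvPolynomial.ext
  intro m
  by_cases hm : m = 0
  · subst hm; simp [MvPolynomial.coeff_C]
  · rw [MvPolynomial.coeff_C, if_neg (fun h => hm h.symm)]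
    have hex : ∃ i : Fin 2, m i ≠ 0 := by
      by_contra hc
      push_neg at hc
      apply hm
      ext i
      fin_cases i <;> simp [hc]
    obtain ⟨i, hi⟩ := hex
    have hle : Finsupp.single i 1 ≤ m := Finsupp.single_le_iff.mpr (Nat.one_le_iff_ne_zero.mpr hi)
    have hme : (m - Finsupp.single i 1) + Finsupp.single i 1 = m := tsub_add_cancel_of_le hle
    have hz : pderiv i P = 0 := by fin_cases i <;> assumption
    set e : Fin 2 →₀ ℕ := m - Finsupp.single i 1 with he
    set n : ℕ := e i with hn
    have := coeff_pderiv i P e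
    rw [hz, hme, ← hn] at this
    simp only [MvPolynomial.coeff_zero] at this
    rcases mul_eq_zero.mp this.symm with h | h
    · exfalso
      have h2 : ((n + 1 : ℕ) : ℂ) = 0 := by push_cast; linear_combination h
      exact Nat.succ_ne_zero n (by exact_mod_cast h2)
    · exact h

lemma prime_not_dvd_both {wx wy : ℚ} (hwx : 0 < wx) (hwy : 0 < wy)
    {F : S2} {t : ℚ} (hF0 : F ≠ 0)
    (hhom : ∀ a, coeff a F ≠ 0 → wdeg wx wy a = t)
    (hsq : Squarefree F) {P : S2} (hp : Prime P) (hPF : P ∣ F)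
    (h0 : P ∣ pderiv 0 F) (h1 : P ∣ pderiv 1 F) : False := by
  obtain ⟨H, hH⟩ := hPF
  have hPH : ¬ P ∣ H := by
    intro hd
    obtain ⟨K, hK⟩ := hd
    exact hp.not_unit (hsq P ⟨K, by rw [hH, hK]; ring⟩)
  have key : ∀ i : Fin 2, P ∣ pderiv i F → pderiv i P = 0 := by
    intro i hi
    rw [hH, pderiv_mul] at hi
    have : P ∣ pderiv i P * H := (dvd_add_left (dvd_mul_right P _)).mp hi
    have hPp : P ∣ pderiv i P := (hp.dvd_mul.mp this).resolve_right hPH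
    exact dvd_pderiv_eq_zero hp.ne_zero i hPp
  have hCP : P = C (coeff 0 P) := eq_C_of_pderiv_eq_zero (key 0 h0) (key 1 h1)
  have hc0 : coeff 0 P = 0 :=
    divisor_constantCoeff hwx hwy hF0 hhom ⟨H, hH⟩ hp.not_unit
  rw [hc0, map_zero] at hCP
  exact hp.ne_zero hCP

lemma squarefree_dvd_aux (Fx Fy : S2) (F : S2) :
    Squarefree F → (∀ P, Prime P → P ∣ F → P ∣ Fx → P ∣ Fy → False) →
    ∀ G : S2, F ∣ G * Fx → F ∣ G * Fy → F ∣ G := by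
  induction F using WfDvdMonoid.induction_on_irreducible with
  | zero => intro hsq; exact absurd hsq not_squarefree_zero
  | unit u hu => intro _ _ G _ _; exact hu.dvd
  | mul a i ha hi IH =>
    intro hsq hnc G hgx hgy
    have hpi : Prime i := UniqueFactorizationMonoid.irreducible_iff_prime.mp hi
    have hidvd : i ∣ i * a := dvd_mul_right _ _
    have step : ∀ G' : S2, i ∣ G' → i * a ∣ G' * Fx → i * a ∣ G' * Fy → i * a ∣ G' := by
      intro G' hiG hx hy
      obtain ⟨G'', rfl⟩ := hiG
      have hax : a ∣ G'' * Fx := by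
        have := hx
        rw [mul_assoc] at this
        exact (mul_dvd_mul_iff_left hpi.ne_zero).mp this
      have hay : a ∣ G'' * Fy := by
        have := hy
        rw [mul_assoc] at this
        exact (mul_dvd_mul_iff_left hpi.ne_zero).mp this
      have hsa : Squarefree a := hsq.squarefree_of_dvd (dvd_mul_left a i)
      have hnc' : ∀ P, Prime P → P ∣ a → P ∣ Fx → P ∣ Fy → False :=
        fun P hP hd => hnc P hP (hd.mul_left i)
      exact mul_dvd_mul_left i (IH hsa hnc' G'' hax hay)
    by_cases hix : i ∣ Fx
    · have hiy : ¬ i ∣ Fy := fun h => hnc i hpi hidvd hix h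
      have hiG : i ∣ G := by
        have : i ∣ G * Fy := hidvd.trans hgy
        exact (hpi.dvd_mul.mp this).resolve_right hiy
      exact step G hiG hgx hgy
    · have hiG : i ∣ G := by
        have : i ∣ G * Fx := hidvd.trans hgx
        exact (hpi.dvd_mul.mp this).resolve_right hix
      exact step G hiG hgx hgy

/-- A finite set of exponents containing all exponents of weighted degree `s`. -/
noncomputable def bset (wx wy s : ℚ) : Finset (Fin 2 →₀ ℕ) :=
  (Finset.range (⌈s/wx⌉₊+1) ×ˢ Finset.range (⌈s/wy⌉₊+1)).image
    (fun p => Finsupp.single 0 p.1 + Finsupp.single 1 p.2)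

lemma mem_bset {wx wy : ℚ} (hwx : 0 < wx) (hwy : 0 < wy) {s : ℚ} {d : Fin 2 →₀ ℕ}
    (h : wdeg wx wy d = s) : d ∈ bset wx wy s := by
  have hd0 : (d 0 : ℚ) * wx ≤ s := by
    have h1 : (0:ℚ) ≤ wy * d 1 := by positivity
    unfold wdeg at h; nlinarith
  have hd1 : (d 1 : ℚ) * wy ≤ s := by
    have h1 : (0:ℚ) ≤ wx * d 0 := by positivity
    unfold wdeg at h; nlinarith
  have hb0 : d 0 ≤ ⌈s/wx⌉₊ := by
    have : (d 0 : ℚ) ≤ s / wx := (le_div_iff₀ hwx).mpr hd0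
    exact_mod_cast le_trans this (Nat.le_ceil _)
  have hb1 : d 1 ≤ ⌈s/wy⌉₊ := by
    have : (d 1 : ℚ) ≤ s / wy := (le_div_iff₀ hwy).mpr hd1
    exact_mod_cast le_trans this (Nat.le_ceil _)
  refine Finset.mem_image.mpr ⟨(d 0, d 1), ?_, (fin2_eq d).symm⟩
  refine Finset.mem_product.mpr ⟨?_, ?_⟩
  · exact Finset.mem_range.mpr (Nat.lt_succ_of_le hb0)
  · exact Finset.mem_range.mpr (Nat.lt_succ_of_le hb1)

/-- Projection of a power series onto its weighted-homogeneous part of weight `s`,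
as a polynomial. -/
noncomputable def proj (wx wy s : ℚ) (g : R2) : S2 :=
  ∑ e ∈ bset wx wy s,
    monomial e (if wdeg wx wy e = s then MvPowerSeries.coeff e g else 0)

lemma coeff_proj {wx wy : ℚ} (hwx : 0 < wx) (hwy : 0 < wy) (s : ℚ) (g : R2)
    (d : Fin 2 →₀ ℕ) :
    coeff d (proj wx wy s g) =
      if wdeg wx wy d = s then MvPowerSeries.coeff d g else 0 := by
  rw [proj, coeff_sum]
  simp only [coeff_monomial]
  rw [Finset.sum_ite_eq' _ d]
  by_cases hd : wdeg wx wy d = s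
  · rw [if_pos (mem_bset hwx hwy hd)]
  · split_ifs with hmem <;> simp [hd]

lemma proj_mul {wx wy : ℚ} (hwx : 0 < wx) (hwy : 0 < wy) (u : S2) (t : ℚ)
    (hu : ∀ a, coeff a u ≠ 0 → wdeg wx wy a = t) (g : R2) (s : ℚ) :
    proj wx wy s ((u : R2) * g) = u * proj wx wy (s - t) g := by
  apply MvPolynomial.ext
  intro d
  rw [coeff_proj hwx hwy, MvPolynomial.coeff_mul]
  by_cases h : wdeg wx wy d = s
  · rw [if_pos h, MvPowerSeries.coeff_mul]
    refine Finset.sum_congr rfl ?_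
    rintro ⟨a, b⟩ hmem
    have hab : a + b = d := Finset.HasAntidiagonal.mem_antidiagonal.mp hmem
    by_cases hc : coeff a u = 0
    · simp [hc, MvPolynomial.coeff_coe]
    · have hwa : wdeg wx wy a = t := hu a hc
      have hwb : wdeg wx wy b = s - t := by
        have := wdeg_add wx wy a b
        rw [hab, h, hwa] at this; linarith
      rw [coeff_proj hwx hwy, if_pos hwb, MvPolynomial.coeff_coe,
        MvPowerSeries.coeff_apply]
  · rw [if_neg h]
    refine (Finset.sum_eq_zero ?_).symm
    rintro ⟨a, b⟩ hmem
    have hab : a + b = d := Finset.HasAntidiagonal.mem_antidiagonal.mp hmem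
    by_cases hc : coeff a u = 0
    · simp [hc]
    · have hwa : wdeg wx wy a = t := hu a hc
      have hwb : wdeg wx wy b ≠ s - t := by
        intro hb
        apply h
        have := wdeg_add wx wy a b
        rw [hab, hwa, hb] at this; linarith
      rw [coeff_proj hwx hwy, if_neg hwb, mul_zero]

lemma dvd_assemble {wx wy : ℚ} (hwx : 0 < wx) (hwy : 0 < wy) (u : S2) (t : ℚ)
    (hu : ∀ a, coeff a u ≠ 0 → wdeg wx wy a = t) (g : R2)
    (h : ∀ s : ℚ, u ∣ proj wx wy s g) : (u : R2) ∣ g := by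
  have hq : ∀ s : ℚ, ∃ q : S2, proj wx wy s g = u * q := fun s => (h s)
  choose q hqs using hq
  refine ⟨(id (fun e => coeff e (q (wdeg wx wy e + t))) : R2), ?_⟩
  apply MvPowerSeries.ext
  intro e
  have h1 : MvPowerSeries.coeff e g = coeff e (proj wx wy (wdeg wx wy e) g) := by
    rw [coeff_proj hwx hwy, if_pos rfl]
  rw [h1, hqs, MvPolynomial.coeff_mul, MvPowerSeries.coeff_mul]
  refine Finset.sum_congr rfl ?_
  rintro ⟨a, b⟩ hmem
  have hab : a + b = e := Finset.HasAntidiagonal.mem_antidiagonal.mp hmem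
  by_cases hc : coeff a u = 0
  · simp [hc, MvPolynomial.coeff_coe]
  · have hwa : wdeg wx wy a = t := hu a hc
    have hwb : wdeg wx wy b + t = wdeg wx wy e := by
      have := wdeg_add wx wy a b
      rw [hab, hwa] at this; linarith
    rw [← hwb]
    simp only [MvPolynomial.coeff_coe, MvPowerSeries.coeff_apply]
    rfl

lemma dvd_of_dvd_partials {wx wy : ℚ} (hwx : 0 < wx) (hwy : 0 < wy) (F : S2)
    (hF0 : F ≠ 0) (hhom : ∀ a, coeff a F ≠ 0 → wdeg wx wy a = 1)
    (hsq : Squarefree F) (g : R2)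
    (hx : (F : R2) ∣ g * ((pderiv 0 F : S2) : R2))
    (hy : (F : R2) ∣ g * ((pderiv 1 F : S2) : R2)) : (F : R2) ∣ g := by
  have hhomd : ∀ i : Fin 2, ∀ a, coeff a (pderiv i F) ≠ 0 →
      wdeg wx wy a = 1 - ![wx, wy] i := by
    intro i a ha
    rw [coeff_pderiv] at ha
    have h2 := hhom _ (right_ne_zero_of_mul ha)
    have h3 := wdeg_add_single wx wy a i
    rw [h2] at h3; linarith
  have key : ∀ i : Fin 2, (F : R2) ∣ g * ((pderiv i F : S2) : R2) →
      ∀ s : ℚ, F ∣ proj wx wy s g * pderiv i F := by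
    intro i hi s
    obtain ⟨h, hh⟩ := hi
    have e1 : ((pderiv i F : S2) : R2) * g = (F : R2) * h := by
      rw [mul_comm]; exact hh
    have e2 := proj_mul hwx hwy (pderiv i F) (1 - ![wx, wy] i) (hhomd i) g
      (s + (1 - ![wx, wy] i))
    have e3 := proj_mul hwx hwy F 1 hhom h (s + (1 - ![wx, wy] i))
    rw [e1] at e2
    rw [e3] at e2
    have e4 : s + (1 - ![wx, wy] i) - (1 - ![wx, wy] i) = s := by ring
    rw [e4] at e2
    exact ⟨proj wx wy (s + (1 - ![wx, wy] i) - 1) h, by rw [mul_comm (proj wx wy s g)]; exact e2.symm⟩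
  have hnc : ∀ P : S2, Prime P → P ∣ F → P ∣ pderiv 0 F → P ∣ pderiv 1 F → False :=
    fun P hp h1 h2 h3 => prime_not_dvd_both hwx hwy hF0 hhom hsq hp h1 h2 h3
  have hall : ∀ s : ℚ, F ∣ proj wx wy s g := by
    intro s
    exact squarefree_dvd_aux (pderiv 0 F) (pderiv 1 F) F hsq hnc (proj wx wy s g)
      (key 0 hx s) (key 1 hy s)
  exact dvd_assemble hwx hwy F 1 hhom g hall

lemma coeff_X_mul_pderiv2 (i : Fin 2) (f : R2) (e : Fin 2 →₀ ℕ) :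
    MvPowerSeries.coeff e (MvPowerSeries.X i * pderiv2 i f) =
      (e i : ℂ) * MvPowerSeries.coeff e f := by
  rw [MvPowerSeries.X_def, MvPowerSeries.coeff_monomial_mul]
  by_cases hle : Finsupp.single i 1 ≤ e
  · rw [if_pos hle, one_mul]
    have h1 : 1 ≤ e i := by
      have := hle i
      simpa [Finsupp.single_apply] using this
    set d : Fin 2 →₀ ℕ := e - Finsupp.single i 1 with hd
    have hme : d + Finsupp.single i 1 = e := tsub_add_cancel_of_le hle
    rw [coeff_pderiv2, hme]
    congr 1
    have h2 : d i = e i - 1 := by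
      rw [hd, Finsupp.tsub_apply, Finsupp.single_eq_same]
    rw [h2]
    have h3 : (e i - 1) + 1 = e i := Nat.succ_pred_eq_of_pos h1
    exact_mod_cast h3
  · rw [if_neg hle]
    have h0 : e i = 0 := by
      by_contra hc
      exact hle (Finsupp.single_le_iff.mpr (Nat.one_le_iff_ne_zero.mpr hc))
    rw [h0, Nat.cast_zero, zero_mul]

end SaitoQH

theorem logForms_basis_of_quasihomogeneous
    (f : MvPowerSeries (Fin 2) ℂ) (hf0 : f ≠ 0) (hfu : ¬IsUnit f) (hsf : Squarefree f)
    (wx wy : ℚ) (hwx : 0 < wx) (hwy : 0 < wy)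
    (hqh : (wx : ℂ) • (MvPowerSeries.X 0 * pderiv2 0 f)
      + (wy : ℂ) • (MvPowerSeries.X 1 * pderiv2 1 f) = f) :
    ∃ B : Module.Basis (Fin 2) (MvPowerSeries (Fin 2) ℂ) ↥(logForms f),
      (B 0 : MvPowerSeries (Fin 2) ℂ × MvPowerSeries (Fin 2) ℂ)
          = (pderiv2 0 f, pderiv2 1 f) ∧
      (B 1 : MvPowerSeries (Fin 2) ℂ × MvPowerSeries (Fin 2) ℂ)
          = ((wy : ℂ) • MvPowerSeries.X 1, -((wx : ℂ) • MvPowerSeries.X 0)) := by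
  classical
  have hqh' : MvPowerSeries.C (σ := Fin 2) (wx:ℂ) * (MvPowerSeries.X 0 * pderiv2 0 f)
      + MvPowerSeries.C (σ := Fin 2) (wy:ℂ) * (MvPowerSeries.X 1 * pderiv2 1 f) = f := by
    rw [← MvPowerSeries.smul_eq_C_mul, ← MvPowerSeries.smul_eq_C_mul]; exact hqh
  -- coefficientwise homogeneity of f
  have hco : ∀ e : Fin 2 →₀ ℕ, MvPowerSeries.coeff e f ≠ 0 →
      SaitoQH.wdeg wx wy e = 1 := by
    intro e hce
    have h1 := congrArg (MvPowerSeries.coeff e) hqh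
    rw [map_add, MvPowerSeries.coeff_smul, MvPowerSeries.coeff_smul,
      SaitoQH.coeff_X_mul_pderiv2, SaitoQH.coeff_X_mul_pderiv2] at h1
    have h2 : ((wx : ℂ) * (e 0) + (wy:ℂ) * (e 1) - 1) * MvPowerSeries.coeff e f = 0 := by
      linear_combination h1
    rcases mul_eq_zero.mp h2 with h | h
    · have h3 : ((wx * (e 0) + wy * (e 1) : ℚ) : ℂ) = ((1:ℚ) : ℂ) := by
        push_cast
        linear_combination h
      have h4 := Rat.cast_injective (α := ℂ) h3
      simpa [SaitoQH.wdeg] using h4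
    · exact absurd h hce
  -- the polynomial F with coe F = f
  set F : SaitoQH.S2 := SaitoQH.proj wx wy 1 f with hF
  have hFcoe : (F : SaitoQH.R2) = f := by
    apply MvPowerSeries.ext
    intro e
    rw [MvPolynomial.coeff_coe, hF, SaitoQH.coeff_proj hwx hwy]
    by_cases h : SaitoQH.wdeg wx wy e = 1
    · rw [if_pos h]
    · rw [if_neg h]
      by_contra hc
      exact h (hco e fun h0 => hc h0.symm)
  have hhomF : ∀ a, MvPolynomial.coeff a F ≠ 0 → SaitoQH.wdeg wx wy a = 1 := by
    intro a ha
    rw [hF, SaitoQH.coeff_proj hwx hwy] at ha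
    by_contra h
    rw [if_neg h] at ha; exact ha rfl
  have hF0 : F ≠ 0 := by
    intro h
    apply hf0
    rw [← hFcoe, h, MvPolynomial.coe_zero]
  have hsqF : Squarefree F := by
    intro d hdd
    by_contra hu
    have hdF : d ∣ F := (dvd_mul_right d d).trans hdd
    have hc0 : MvPolynomial.coeff 0 d = 0 :=
      SaitoQH.divisor_constantCoeff hwx hwy hF0 hhomF hdF hu
    have hdd2 : (d : SaitoQH.R2) * (d : SaitoQH.R2) ∣ f := by
      rw [← hFcoe, ← MvPolynomial.coe_mul]
      exact map_dvd (MvPolynomial.coeToMvPowerSeries.ringHom) hdd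
    have hud := hsf _ hdd2
    rw [MvPowerSeries.isUnit_iff_constantCoeff,
      ← MvPowerSeries.coeff_zero_eq_constantCoeff_apply, MvPolynomial.coeff_coe, hc0] at hud
    exact not_isUnit_zero hud
  have hfx : ((MvPolynomial.pderiv 0 F : SaitoQH.S2) : SaitoQH.R2) = pderiv2 0 f := by
    rw [SaitoQH.coe_pderiv, hFcoe]
  have hfy : ((MvPolynomial.pderiv 1 F : SaitoQH.S2) : SaitoQH.R2) = pderiv2 1 f := by
    rw [SaitoQH.coe_pderiv, hFcoe]
  -- formula for the linear map
  have hmap : ∀ A B : MvPowerSeries (Fin 2) ℂ,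
      logFormsMap f (A, B) = pderiv2 1 f * A - pderiv2 0 f * B := by
    intro A B
    simp [logFormsMap, smul_eq_mul]
  -- membership of the two generators
  have m1 : ((pderiv2 0 f, pderiv2 1 f) :
      MvPowerSeries (Fin 2) ℂ × MvPowerSeries (Fin 2) ℂ) ∈ logForms f := by
    show logFormsMap f _ ∈ Ideal.span {f}
    rw [hmap]
    have h : pderiv2 1 f * pderiv2 0 f - pderiv2 0 f * pderiv2 1 f = 0 := by ring
    rw [h]
    exact Ideal.zero_mem _
  have m2 : ((((wy : ℂ) • MvPowerSeries.X 1 : MvPowerSeries (Fin 2) ℂ),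
      -((wx : ℂ) • MvPowerSeries.X 0)) :
      MvPowerSeries (Fin 2) ℂ × MvPowerSeries (Fin 2) ℂ) ∈ logForms f := by
    show logFormsMap f _ ∈ Ideal.span {f}
    rw [hmap]
    have h : pderiv2 1 f * ((wy : ℂ) • MvPowerSeries.X 1)
        - pderiv2 0 f * (-((wx : ℂ) • MvPowerSeries.X 0)) = f := by
      rw [MvPowerSeries.smul_eq_C_mul, MvPowerSeries.smul_eq_C_mul]
      linear_combination hqh'
    rw [h]
    exact Ideal.mem_span_singleton_self f
  set b : Fin 2 → ↥(logForms f) := ![⟨_, m1⟩, ⟨_, m2⟩] with hb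
  -- surjectivity
  have hsurj : ∀ A B : MvPowerSeries (Fin 2) ℂ, (A, B) ∈ logForms f →
      ∃ p c : MvPowerSeries (Fin 2) ℂ,
      A = p * pderiv2 0 f + c * ((wy : ℂ) • MvPowerSeries.X 1) ∧
      B = p * pderiv2 1 f + c * (-((wx : ℂ) • MvPowerSeries.X 0)) := by
    intro A B hmem
    have hmem' : logFormsMap f (A, B) ∈ Ideal.span {f} := hmem
    rw [hmap] at hmem'
    obtain ⟨c, hc⟩ := Ideal.mem_span_singleton'.mp hmem'
    have ex : (MvPowerSeries.C (σ := Fin 2) (wx:ℂ) * (MvPowerSeries.X 0 * A)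
          + MvPowerSeries.C (σ := Fin 2) (wy:ℂ) * (MvPowerSeries.X 1 * B)) * pderiv2 0 f
        = (A - c * (MvPowerSeries.C (σ := Fin 2) (wy:ℂ) * MvPowerSeries.X 1)) * f := by
      linear_combination (MvPowerSeries.C (σ := Fin 2) (wy:ℂ) * MvPowerSeries.X 1) * hc
        + A * hqh'
    have ey : (MvPowerSeries.C (σ := Fin 2) (wx:ℂ) * (MvPowerSeries.X 0 * A)
          + MvPowerSeries.C (σ := Fin 2) (wy:ℂ) * (MvPowerSeries.X 1 * B)) * pderiv2 1 f
        = (B + c * (MvPowerSeries.C (σ := Fin 2) (wx:ℂ) * MvPowerSeries.X 0)) * f := by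
      linear_combination (-(MvPowerSeries.C (σ := Fin 2) (wx:ℂ) * MvPowerSeries.X 0)) * hc
        + B * hqh'
    have hdvd : (F : SaitoQH.R2) ∣ (MvPowerSeries.C (σ := Fin 2) (wx:ℂ) * (MvPowerSeries.X 0 * A)
        + MvPowerSeries.C (σ := Fin 2) (wy:ℂ) * (MvPowerSeries.X 1 * B)) := by
      apply SaitoQH.dvd_of_dvd_partials hwx hwy F hF0 hhomF hsqF
      · rw [hfx, hFcoe]
        exact ⟨A - c * (MvPowerSeries.C (σ := Fin 2) (wy:ℂ) * MvPowerSeries.X 1),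
          by rw [ex]; ring⟩
      · rw [hfy, hFcoe]
        exact ⟨B + c * (MvPowerSeries.C (σ := Fin 2) (wx:ℂ) * MvPowerSeries.X 0),
          by rw [ey]; ring⟩
    rw [hFcoe] at hdvd
    obtain ⟨p, hp⟩ := hdvd
    refine ⟨p, c, ?_, ?_⟩
    · have h5 : f * (p * pderiv2 0 f)
          = f * (A - c * (MvPowerSeries.C (σ := Fin 2) (wy:ℂ) * MvPowerSeries.X 1)) := by
        rw [← mul_assoc, ← hp, ex]; ring
      have h6 := mul_left_cancel₀ hf0 h5
      rw [MvPowerSeries.smul_eq_C_mul]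
      linear_combination -h6
    · have h5 : f * (p * pderiv2 1 f)
          = f * (B + c * (MvPowerSeries.C (σ := Fin 2) (wx:ℂ) * MvPowerSeries.X 0)) := by
        rw [← mul_assoc, ← hp, ey]; ring
      have h6 := mul_left_cancel₀ hf0 h5
      rw [MvPowerSeries.smul_eq_C_mul]
      linear_combination -h6
  -- nonvanishing facts
  have hX1 : (MvPowerSeries.X 1 : MvPowerSeries (Fin 2) ℂ) ≠ 0 := by
    intro h
    have h2 := congrArg (MvPowerSeries.coeff (Finsupp.single 1 1)) h
    rw [MvPowerSeries.coeff_index_single_self_X] at h2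
    simpa using h2
  have hwy0 : ((wy : ℂ)) ≠ 0 := by
    exact_mod_cast (Rat.cast_ne_zero (α := ℂ)).mpr hwy.ne'

  -- linear independence
  have li : LinearIndependent (MvPowerSeries (Fin 2) ℂ) b := by
    rw [Fintype.linearIndependent_iff]
    intro g hg
    have hg' : g 0 • ((pderiv2 0 f, pderiv2 1 f) :
          MvPowerSeries (Fin 2) ℂ × MvPowerSeries (Fin 2) ℂ)
        + g 1 • (((wy : ℂ) • MvPowerSeries.X 1, -((wx : ℂ) • MvPowerSeries.X 0)) :
          MvPowerSeries (Fin 2) ℂ × MvPowerSeries (Fin 2) ℂ) = 0 := by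
      have h2 := congrArg (fun z : ↥(logForms f) =>
        (z : MvPowerSeries (Fin 2) ℂ × MvPowerSeries (Fin 2) ℂ)) hg
      simpa [hb, Fin.sum_univ_two] using h2
    rw [Prod.ext_iff] at hg'
    obtain ⟨h1, h2⟩ := hg'
    simp only [Prod.fst_add, Prod.snd_add, Prod.smul_mk, Prod.fst_zero, Prod.snd_zero,
      smul_eq_mul] at h1 h2
    rw [MvPowerSeries.smul_eq_C_mul] at h1
    rw [MvPowerSeries.smul_eq_C_mul] at h2
    have h3 : g 0 * f = 0 := by
      linear_combination (MvPowerSeries.C (σ := Fin 2) (wx:ℂ) * MvPowerSeries.X 0) * h1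
        + (MvPowerSeries.C (σ := Fin 2) (wy:ℂ) * MvPowerSeries.X 1) * h2
        - (g 0) * hqh'
    have hg0 : g 0 = 0 := (mul_eq_zero.mp h3).resolve_right hf0
    have h4 : g 1 * (MvPowerSeries.C (σ := Fin 2) (wy:ℂ) * MvPowerSeries.X 1) = 0 := by
      rw [hg0] at h1
      linear_combination h1
    have hCwy : (MvPowerSeries.C (σ := Fin 2) (wy:ℂ)) ≠ 0 := by
      intro h
      have h5 := congrArg (MvPowerSeries.constantCoeff (σ := Fin 2) (R := ℂ)) h
      rw [MvPowerSeries.constantCoeff_C] at h5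
      exact hwy0 (by simpa using h5)
    have hg1 : g 1 = 0 :=
      (mul_eq_zero.mp h4).resolve_right (mul_ne_zero hCwy hX1)
    intro i
    fin_cases i
    · exact hg0
    · exact hg1
  -- spanning
  have sp : ⊤ ≤ Submodule.span (MvPowerSeries (Fin 2) ℂ) (Set.range b) := by
    rintro ⟨⟨A, B⟩, hm⟩ -
    obtain ⟨p, c, h1, h2⟩ := hsurj A B hm
    have hval : ((⟨(A, B), hm⟩ : ↥(logForms f))) = p • b 0 + c • b 1 := by
      apply Subtype.ext
      simp only [hb, Submodule.coe_add, SetLike.val_smul, Matrix.cons_val_zero,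
        Matrix.cons_val_one, Matrix.head_cons, Prod.smul_mk, Prod.mk_add_mk, smul_eq_mul]
      rw [Prod.mk.injEq]
      constructor
      · rw [h1]
      · rw [h2]
    rw [hval]
    exact Submodule.add_mem _
      (Submodule.smul_mem _ _ (Submodule.subset_span ⟨0, rfl⟩))
      (Submodule.smul_mem _ _ (Submodule.subset_span ⟨1, rfl⟩))
  refine ⟨Module.Basis.mk li sp, ?_, ?_⟩
  · rw [Module.Basis.mk_apply]
    simp [hb]
  · rw [Module.Basis.mk_apply]
    simp [hb]
end
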